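/- Let k be a field and let A = k[x₁,x₂,x₃]/I be a standard graded Artinian algebra whose Hilbert function (h_i) satisfies: h₁ = 3, and for some integers d ≥ 1 and s ≥ 2, h_d = h_{d+1} = ⋯ = h_{d+s−1} = d + s and h_{d+s} > d + s. Then A has a nonzero socle element in degree d + s − 2, i.e., there is a nonzero homogeneous a ∈ A_{d+s−2} with A₁·a = 0; in particular A is not level. -/

import Mathlib

open MvPolynomial

/-- The degree-`t` graded piece of the standard graded quotient `k[x₁,…,xₙ]/I`:
the image in the quotient of the space of homogeneous polynomials of degree `t`. -/
noncomputable def gradedPiece (k : Type*) [Field k] (n : ℕ)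
    (I : Ideal (MvPolynomial (Fin n) k)) (t : ℕ) :
    Submodule k (MvPolynomial (Fin n) k ⧸ I) :=
  (MvPolynomial.homogeneousSubmodule (Fin n) k t).map
    (Ideal.Quotient.mkₐ k I).toLinearMap

/-- The Hilbert function of the quotient `k[x₁,…,xₙ]/I`. -/
noncomputable def hilbFn (k : Type*) [Field k] (n : ℕ)
    (I : Ideal (MvPolynomial (Fin n) k)) (t : ℕ) : ℕ :=
  Module.finrank k (gradedPiece k n I t)

/-- `I` is a homogeneous ideal: it contains all homogeneous components of its elements. -/
def IsHomogeneousIdeal (k : Type*) [Field k] (n : ℕ)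
    (I : Ideal (MvPolynomial (Fin n) k)) : Prop :=
  ∀ p ∈ I, ∀ t : ℕ, MvPolynomial.homogeneousComponent t p ∈ I

/-- `a` is a (nonzero, homogeneous) socle element of degree `t` of the quotient:
`a ∈ A_t`, `a ≠ 0`, and `A₁ · a = 0`. -/
def IsSocleElem (k : Type*) [Field k] (n : ℕ)
    (I : Ideal (MvPolynomial (Fin n) k)) (t : ℕ)
    (a : MvPolynomial (Fin n) k ⧸ I) : Prop :=
  a ∈ gradedPiece k n I t ∧ a ≠ 0 ∧
    ∀ b ∈ gradedPiece k n I 1, b * a = 0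

/-- The quotient `A = k[x₁,…,xₙ]/I` is level: the socle vanishes in every degree `t`
strictly smaller than the socle degree (i.e. in every degree `t` such that `A_{t'} ≠ 0`
for some `t' > t`). -/
def IsLevel (k : Type*) [Field k] (n : ℕ)
    (I : Ideal (MvPolynomial (Fin n) k)) : Prop :=
  ∀ t : ℕ, (∃ t', t < t' ∧ gradedPiece k n I t' ≠ ⊥) →
    ∀ a, ¬ IsSocleElem k n I t a

open Submodule Module

set_option maxHeartbeats 1000000

namespace S12aux

variable {k : Type*} [Field k]

local notation "R3" => MvPolynomial (Fin 3) k

/-- degree-`r` homogeneous piece of `k[x,y,z]` -/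
abbrev PP (k : Type*) [Field k] (r : ℕ) : Submodule k (MvPolynomial (Fin 3) k) :=
  homogeneousSubmodule (Fin 3) k r

/-- multiplication by a fixed polynomial, as a linear map -/
noncomputable def ml (f : R3) : R3 →ₗ[k] R3 := LinearMap.mulLeft k f

@[simp] lemma ml_apply (f g : R3) : ml f g = f * g := rfl

/-- the substitution `z ↦ 0` -/
noncomputable def rho (k : Type*) [Field k] :
    MvPolynomial (Fin 3) k →ₐ[k] MvPolynomial (Fin 3) k :=
  aeval ![X 0, X 1, 0]

noncomputable def dd (i j : ℕ) : Fin 3 →₀ ℕ := Finsupp.single 0 i + Finsupp.single 1 j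

lemma deg3 (d : Fin 3 →₀ ℕ) : d.degree = d 0 + d 1 + d 2 := by
  rw [Finsupp.degree_apply, Finset.sum_subset (Finset.subset_univ d.support)
    (by intro i _ hi; exact Finsupp.notMem_support_iff.mp hi), Fin.sum_univ_three]

@[simp] lemma dd_apply0 (i j : ℕ) : dd i j 0 = i := by
  simp [dd, Finsupp.single_apply]

@[simp] lemma dd_apply1 (i j : ℕ) : dd i j 1 = j := by
  simp [dd, Finsupp.single_apply]

@[simp] lemma dd_apply2 (i j : ℕ) : dd i j 2 = 0 := by
  simp [dd, Finsupp.single_apply]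

lemma dd_degree (i j : ℕ) : (dd i j).degree = i + j := by
  rw [deg3]; simp

lemma dd_add (a b c d : ℕ) : dd a b + dd c d = dd (a + c) (b + d) := by
  unfold dd; rw [Finsupp.single_add, Finsupp.single_add]; abel

lemma eq_dd_of {d : Fin 3 →₀ ℕ} (h2 : d 2 = 0) : d = dd (d 0) (d 1) := by
  ext i; fin_cases i <;> simp [dd, Finsupp.single_apply, h2]

lemma X_eq_monomial (s : Fin 3) : (X s : R3) = monomial (Finsupp.single s 1) 1 := by
  rw [← pow_one (X s : R3), X_pow_eq_monomial]

lemma monomial_mem_PP {d : Fin 3 →₀ ℕ} (c : k) {r : ℕ} (h : d.degree = r) :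
    (monomial d c : R3) ∈ PP k r := isHomogeneous_monomial c h

lemma X_mem_PP1 (s : Fin 3) : (X s : R3) ∈ PP k 1 := isHomogeneous_X k s

instance PP_fd (r : ℕ) : FiniteDimensional k (PP k r) := by
  have hle : PP k r ≤ restrictTotalDegree (Fin 3) k r := by
    intro p hp
    rw [mem_restrictTotalDegree]
    exact ((mem_homogeneousSubmodule _ _).mp hp).totalDegree_le
  exact Submodule.finiteDimensional_of_le hle

lemma PP_eq_span (r : ℕ) :
    PP k r = span k ((fun d : Fin 3 →₀ ℕ => (monomial d (1:k) : R3)) '' {d | d.degree = r}) := by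
  refine le_antisymm ?_ ?_
  · intro p hp
    have hp' : MvPolynomial.IsHomogeneous p r := hp
    rw [p.as_sum]
    refine sum_mem fun d hd => ?_
    have hdeg : d.degree = r := by
      by_contra hne
      exact (MvPolynomial.mem_support_iff.mp hd) (hp'.coeff_eq_zero hne)
    have he : (monomial d (coeff d p) : R3) = (coeff d p) • monomial d 1 := by
      rw [smul_monomial, smul_eq_mul, mul_one]
    rw [he]
    exact smul_mem _ _ (subset_span ⟨d, hdeg, rfl⟩)
  · rw [span_le]
    rintro q ⟨d, hd, rfl⟩
    exact monomial_mem_PP 1 hd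

lemma rho_monomial (d : Fin 3 →₀ ℕ) (c : k) :
    rho k (monomial d c) = if d 2 = 0 then monomial d c else 0 := by
  rw [rho, aeval_monomial, Finsupp.prod_fintype _ _ (fun i => pow_zero _), Fin.prod_univ_three]
  have e0 : (![X 0, X 1, (0:R3)]) 0 = X 0 := rfl
  have e1 : (![X 0, X 1, (0:R3)]) 1 = X 1 := rfl
  have e2 : (![X 0, X 1, (0:R3)]) 2 = 0 := rfl
  rw [e0, e1, e2]
  split_ifs with h
  · rw [h, pow_zero, mul_one, monomial_eq, Finsupp.prod_fintype _ _ (fun i => pow_zero _),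
      Fin.prod_univ_three, h, pow_zero, mul_one]
    rfl
  · rw [zero_pow h, mul_zero, mul_zero]

noncomputable def QQ (k : Type*) [Field k] (r : ℕ) : Submodule k (MvPolynomial (Fin 3) k) :=
  span k (Set.range fun i : Fin (r+1) => (monomial (dd i (r - i)) (1:k) : MvPolynomial (Fin 3) k))

lemma monomial_dd_mem_QQ {i j r : ℕ} (h : i + j = r) :
    (monomial (dd i j) (1:k) : R3) ∈ QQ k r := by
  have hi : i < r + 1 := by omega
  obtain rfl : j = r - i := by omega
  exact subset_span ⟨⟨i, hi⟩, rfl⟩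

lemma QQ_le_PP (r : ℕ) : QQ k r ≤ PP k r := by
  rw [QQ, span_le]
  rintro q ⟨i, rfl⟩
  refine monomial_mem_PP 1 ?_
  rw [dd_degree]
  have := i.is_le
  omega

lemma map_rho_PP (r : ℕ) : (PP k r).map (rho k).toLinearMap = QQ k r := by
  rw [PP_eq_span, Submodule.map_span]
  refine le_antisymm (span_le.mpr ?_) (span_le.mpr ?_)
  · rintro q ⟨_, ⟨d, hd, rfl⟩, rfl⟩
    show rho k (monomial d 1) ∈ QQ k r
    rw [rho_monomial]
    split_ifs with h2
    · have hd' : d 0 + d 1 = r := by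
        have := hd
        rw [Set.mem_setOf_eq, deg3, h2] at this
        omega
      rw [eq_dd_of h2]
      exact monomial_dd_mem_QQ hd'
    · exact zero_mem _
  · rintro q ⟨i, rfl⟩
    have hi := i.is_le
    refine subset_span ⟨monomial (dd i (r - i)) 1, ⟨dd i (r-i), ?_, rfl⟩, ?_⟩
    · rw [Set.mem_setOf_eq, dd_degree]; omega
    · show rho k (monomial (dd i (r-i)) 1) = monomial (dd i (r-i)) 1
      rw [rho_monomial, if_pos (dd_apply2 _ _)]



lemma rho_X2 : rho k (X 2) = 0 := by
  rw [rho, aeval_X]; rfl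

lemma ker_rho_PP (r : ℕ) :
    PP k (r+1) ⊓ LinearMap.ker (rho k).toLinearMap = (PP k r).map (ml (X 2)) := by
  refine le_antisymm ?_ ?_
  · rintro p ⟨hp, hker⟩
    have hker' : rho k p = 0 := hker
    have hp' : MvPolynomial.IsHomogeneous p (r+1) := hp
    have hsupp : ∀ d ∈ p.support, d 2 ≠ 0 := by
      intro d hd h2
      have hco : coeff d (rho k p) = coeff d p := by
        conv_lhs => rw [p.as_sum]
        rw [map_sum, coeff_sum]
        rw [Finset.sum_eq_single d]
        · rw [rho_monomial, if_pos h2, coeff_monomial, if_pos rfl]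
        · intro e _ hne
          rw [rho_monomial]
          split_ifs with h
          · rw [coeff_monomial, if_neg hne]
          · exact MvPolynomial.coeff_zero _
        · intro hnd; exact absurd hd hnd
      rw [hker'] at hco
      exact MvPolynomial.mem_support_iff.mp hd (by simpa using hco.symm)
    refine ⟨∑ d ∈ p.support, monomial (d - Finsupp.single 2 1) (coeff d p), ?_, ?_⟩
    · refine sum_mem fun d hd => monomial_mem_PP _ ?_
      have h2 := hsupp d hd
      have hdeg : d.degree = r + 1 := by
        by_contra hne
        exact MvPolynomial.mem_support_iff.mp hd (hp'.coeff_eq_zero hne)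
      rw [deg3] at hdeg
      rw [deg3]
      have e0 : (d - Finsupp.single 2 1 : Fin 3 →₀ ℕ) 0 = d 0 := by
        rw [Finsupp.tsub_apply, Finsupp.single_apply]; simp
      have e1 : (d - Finsupp.single 2 1 : Fin 3 →₀ ℕ) 1 = d 1 := by
        rw [Finsupp.tsub_apply, Finsupp.single_apply]; simp
      have e2 : (d - Finsupp.single 2 1 : Fin 3 →₀ ℕ) 2 = d 2 - 1 := by
        rw [Finsupp.tsub_apply, Finsupp.single_apply]; simp
      rw [e0, e1, e2]; omega
    · show (X 2 : R3) * _ = p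
      rw [Finset.mul_sum]
      conv_rhs => rw [p.as_sum]
      refine Finset.sum_congr rfl fun d hd => ?_
      rw [X_eq_monomial, monomial_mul, one_mul]
      have h2 := hsupp d hd
      have hidx : Finsupp.single 2 1 + (d - Finsupp.single 2 1) = d := by
        ext i
        rw [Finsupp.add_apply, Finsupp.tsub_apply]
        rcases eq_or_ne i 2 with rfl | hne
        · rw [Finsupp.single_eq_same]; omega
        · rw [Finsupp.single_eq_of_ne' (Ne.symm hne)]; omega
      rw [hidx]
  · rintro p ⟨g, hg, rfl⟩
    constructor
    · show (X 2 : R3) * g ∈ PP k (r+1)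
      have := (isHomogeneous_X k 2).mul ((mem_homogeneousSubmodule _ _).mp hg)
      rw [add_comm] at this
      exact this
    · show rho k ((X 2 : R3) * g) = 0
      rw [map_mul, rho_X2, zero_mul]

lemma rank_nullity_sub {M N : Type*} [AddCommGroup M] [Module k M] [AddCommGroup N] [Module k N]
    (f : M →ₗ[k] N) (U : Submodule k M) [FiniteDimensional k U] :
    finrank k (U.map f) + finrank k ↥(U ⊓ LinearMap.ker f) = finrank k U := by
  have h := LinearMap.finrank_range_add_finrank_ker (f.domRestrict U)
  rwa [LinearMap.range_domRestrict, LinearMap.ker_domRestrict,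
    ← Submodule.finrank_map_subtype_eq U (comap U.subtype (LinearMap.ker f)),
    Submodule.map_comap_subtype] at h

lemma map_ml_rank {f : R3} (hf : f ≠ 0) (U : Submodule k (MvPolynomial (Fin 3) k)) :
    finrank k (U.map (ml f)) = finrank k U := by
  have hinj : Function.Injective (ml (k := k) f) := fun a b hab => by
    have : f * a = f * b := hab
    exact mul_left_cancel₀ hf this
  exact ((Submodule.equivMapOfInjective _ hinj U).finrank_eq).symm

lemma QQ_rank (r : ℕ) : finrank k (QQ k r) = r + 1 := by
  rw [QQ]
  have he : (fun i : Fin (r+1) => (monomial (dd i (r - i)) (1:k) : R3))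
      = (fun i : Fin (r+1) => (basisMonomials (Fin 3) k) (dd i (r-i))) := by
    funext i; rw [coe_basisMonomials]
  have hinj : Function.Injective (fun i : Fin (r+1) => dd i (r - i)) := by
    intro a b hab
    have := congrArg (fun d : Fin 3 →₀ ℕ => d 0) hab
    simp only [dd_apply0] at this
    exact Fin.ext this
  rw [he]
  have hcomp : (fun i : Fin (r+1) => (basisMonomials (Fin 3) k) (dd i (r-i)))
      = (⇑(basisMonomials (Fin 3) k) ∘ fun i : Fin (r+1) => dd i (r-i)) := rfl
  rw [hcomp, finrank_span_eq_card
    ((basisMonomials (Fin 3) k).linearIndependent.comp _ hinj), Fintype.card_fin]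

lemma D_succ (r : ℕ) : finrank k (PP k (r+1)) = finrank k (PP k r) + (r+2) := by
  have h := rank_nullity_sub (rho k).toLinearMap (PP k (r+1))
  rw [map_rho_PP, ker_rho_PP, QQ_rank, map_ml_rank (X_ne_zero 2)] at h
  omega

lemma PP_zero : PP k 0 = (1 : Submodule k (MvPolynomial (Fin 3) k)) := by
  rw [PP_eq_span, Submodule.one_eq_span]
  congr 1
  ext q
  constructor
  · rintro ⟨d, hd, rfl⟩
    have : d = 0 := Finsupp.degree_eq_zero_iff d |>.mp hd
    subst this
    simp [MvPolynomial.monomial_zero']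
  · rintro rfl
    exact ⟨0, map_zero _, by simp [MvPolynomial.monomial_zero']⟩

lemma D_zero : finrank k (PP k 0) = 1 := by
  rw [PP_zero, Submodule.one_eq_span, finrank_span_singleton (one_ne_zero)]

lemma D_one : finrank k (PP k 1) = 3 := by
  have h := D_succ (k := k) 0
  rw [D_zero] at h
  simpa using h

lemma span_mul_eq_map (f : R3) (U : Submodule k (MvPolynomial (Fin 3) k)) :
    span k {f} * U = U.map (ml f) := by
  refine le_antisymm (Submodule.mul_le.mpr ?_) ?_
  · intro m hm n hn
    obtain ⟨c, rfl⟩ := Submodule.mem_span_singleton.mp hm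
    refine ⟨c • n, smul_mem _ _ hn, ?_⟩
    rw [ml_apply, smul_mul_assoc, mul_smul_comm]
  · rintro q ⟨g, hg, rfl⟩
    exact Submodule.mul_mem_mul (subset_span rfl) hg

lemma P1_mul_le {r : ℕ} {U : Submodule k (MvPolynomial (Fin 3) k)} (hU : U ≤ PP k r) :
    PP k 1 * U ≤ PP k (r+1) := by
  refine le_trans (mul_le_mul' le_rfl hU) ?_
  have h := homogeneousSubmodule_mul (σ := Fin 3) (R := k) 1 r
  rwa [add_comm] at h

lemma P1_mul_PP (r : ℕ) : PP k 1 * PP k r = PP k (r+1) := by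
  refine le_antisymm (P1_mul_le le_rfl) ?_
  rw [PP_eq_span (r+1), span_le]
  rintro q ⟨d, hd, rfl⟩
  beta_reduce
  have hsum : d 0 + d 1 + d 2 = r + 1 := by rw [← deg3]; exact hd
  have hex : ∃ i : Fin 3, d i ≠ 0 := by
    by_contra h
    push_neg at h
    have h0 := h 0; have h1 := h 1; have h2 := h 2
    omega
  obtain ⟨i, hi⟩ := hex
  have hidx : Finsupp.single i 1 + (d - Finsupp.single i 1) = d := by
    ext j
    rw [Finsupp.add_apply, Finsupp.tsub_apply]
    rcases eq_or_ne j i with rfl | hne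
    · rw [Finsupp.single_eq_same]; omega
    · rw [Finsupp.single_eq_of_ne' (Ne.symm hne)]; omega
  have key : (monomial d (1:k) : R3) = X i * monomial (d - Finsupp.single i 1) 1 := by
    rw [X_eq_monomial, monomial_mul, one_mul, hidx]
  rw [key]
  refine Submodule.mul_mem_mul (X_mem_PP1 i) (monomial_mem_PP 1 ?_)
  have hdi : (d - Finsupp.single i 1 : Fin 3 →₀ ℕ).degree + 1 = d.degree := by
    conv_rhs => rw [← hidx]
    rw [deg3, deg3]
    fin_cases i <;>
      simp [Finsupp.add_apply, Finsupp.tsub_apply, Finsupp.single_apply] <;> omega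
  have hdd : d.degree = r + 1 := hd
  rw [hdd] at hdi
  omega

lemma QQ_one_mul (r : ℕ) : QQ k 1 * QQ k r = QQ k (r+1) := by
  rw [QQ, QQ, QQ, Submodule.span_mul_span]
  refine le_antisymm (span_le.mpr ?_) (span_le.mpr ?_)
  · rintro q ⟨q1, ⟨i, rfl⟩, q2, ⟨j, rfl⟩, rfl⟩
    beta_reduce
    rw [monomial_mul, one_mul, dd_add]
    refine monomial_dd_mem_QQ ?_
    have hi := i.is_le; have hj := j.is_le
    omega
  · rintro q ⟨jj, rfl⟩
    beta_reduce
    have hjj := jj.is_le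
    refine subset_span ?_
    rcases Nat.eq_zero_or_pos (jj : ℕ) with h0 | hpos
    · have hsplit : dd (jj:ℕ) (r + 1 - (jj:ℕ)) = dd 0 1 + dd 0 r := by
        rw [dd_add, h0]; congr 1 <;> omega
      refine ⟨monomial (dd 0 1) 1, ⟨(0 : Fin 2), rfl⟩,
        monomial (dd 0 r) 1, ⟨(0 : Fin (r+1)), rfl⟩, ?_⟩
      show (monomial (dd 0 1) (1:k) : R3) * monomial (dd 0 r) 1 = _
      rw [monomial_mul, one_mul, ← hsplit]
    · obtain ⟨m, hm⟩ : ∃ m, (jj:ℕ) = m + 1 := ⟨(jj:ℕ)-1, by omega⟩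
      have hsplit : dd (jj:ℕ) (r + 1 - (jj:ℕ)) = dd 1 0 + dd m (r - m) := by
        rw [dd_add, hm]; congr 1 <;> omega
      refine ⟨monomial (dd 1 0) 1, ⟨(1 : Fin 2), rfl⟩,
        monomial (dd m (r - m)) 1, ⟨(⟨m, by omega⟩ : Fin (r+1)), rfl⟩, ?_⟩
      show (monomial (dd 1 0) (1:k) : R3) * monomial (dd m (r-m)) 1 = _
      rw [monomial_mul, one_mul, ← hsplit]

lemma mon_dd10 : (monomial (dd 1 0) (1:k) : R3) = X 0 := by
  rw [X_eq_monomial]; congr 1; unfold dd; simp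

lemma mon_dd01 : (monomial (dd 0 1) (1:k) : R3) = X 1 := by
  rw [X_eq_monomial]; congr 1; unfold dd; simp

lemma QQ_one_eq : QQ k 1 = span k {(X 0 : R3)} ⊔ span k {(X 1 : R3)} := by
  rw [QQ, ← Submodule.span_union]
  congr 1
  ext q
  simp only [Set.mem_range, Set.mem_union, Set.mem_singleton_iff]
  constructor
  · rintro ⟨i, rfl⟩
    fin_cases i
    · right; exact mon_dd01
    · left; exact mon_dd10
  · rintro (rfl | rfl)
    · exact ⟨1, mon_dd10⟩
    · exact ⟨0, mon_dd01⟩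

noncomputable def mex (p : R3) : ℕ :=
  sInf ((fun d : Fin 3 →₀ ℕ => d 0) '' (p.support : Set (Fin 3 →₀ ℕ)))

lemma sInf_image_succ (S : Set ℕ) (hS : S.Nonempty) :
    sInf ((fun n => n + 1) '' S) = sInf S + 1 := by
  apply le_antisymm
  · exact Nat.sInf_le ⟨sInf S, Nat.sInf_mem hS, rfl⟩
  · refine le_csInf (hS.image _) ?_
    rintro b ⟨a, ha, rfl⟩
    exact Nat.succ_le_succ (Nat.sInf_le ha)

lemma mex_mul_X0 {p : R3} (hp : p ≠ 0) : mex ((X 0 : R3) * p) = mex p + 1 := by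
  unfold mex
  rw [MvPolynomial.support_X_mul, Finset.coe_map]
  rw [← Set.image_comp]
  have hfun : ((fun d : Fin 3 →₀ ℕ => d 0) ∘ (addLeftEmbedding (Finsupp.single 0 1)))
      = (fun n => n + 1) ∘ (fun d : Fin 3 →₀ ℕ => d 0) := by
    funext d
    simp only [Function.comp_apply, addLeftEmbedding_apply, Finsupp.add_apply,
      Finsupp.single_eq_same]
    omega
  rw [hfun, Set.image_comp]
  exact sInf_image_succ _ ((MvPolynomial.support_nonempty.mpr hp).to_set.image _)

lemma mex_mul_X1 (p : R3) : mex ((X 1 : R3) * p) = mex p := by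
  unfold mex
  rw [MvPolynomial.support_X_mul, Finset.coe_map]
  rw [← Set.image_comp]
  have hfun : ((fun d : Fin 3 →₀ ℕ => d 0) ∘ (addLeftEmbedding (Finsupp.single 1 1)))
      = (fun d : Fin 3 →₀ ℕ => d 0) := by
    funext d
    simp only [Function.comp_apply, addLeftEmbedding_apply, Finsupp.add_apply]
    rw [Finsupp.single_eq_of_ne (by decide)]
    omega
  rw [hfun]

lemma lemG (V : Submodule k (MvPolynomial (Fin 3) k)) [FiniteDimensional k V] (hV : V ≠ ⊥) :
    finrank k V + 1 ≤ finrank k (QQ k 1 * V) := by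
  by_contra hcon
  push_neg at hcon
  have hQ : QQ k 1 * V = V.map (ml (X 0)) ⊔ V.map (ml (X 1)) := by
    rw [QQ_one_eq, Submodule.sup_mul, span_mul_eq_map, span_mul_eq_map]
  haveI : Module.Finite k (V.map (ml (X 0))) := Module.Finite.map V (ml (X 0))
  haveI : Module.Finite k (V.map (ml (X 1))) := Module.Finite.map V (ml (X 1))
  have hr0 : finrank k (V.map (ml (X 0))) = finrank k V := map_ml_rank (X_ne_zero 0) V
  rw [hQ] at hcon
  have heq : V.map (ml (X 0)) = V.map (ml (X 0)) ⊔ V.map (ml (X 1)) := by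
    refine Submodule.eq_of_le_of_finrank_le le_sup_left ?_
    rw [hr0]; omega
  have hle : V.map (ml (X 1)) ≤ V.map (ml (X 0)) := by rw [heq]; exact le_sup_right
  set T : Set ℕ := {n | ∃ v, v ∈ V ∧ v ≠ 0 ∧ mex v = n} with hT
  have hTne : T.Nonempty := by
    obtain ⟨v, hv, hvne⟩ := (Submodule.ne_bot_iff V).mp hV
    exact ⟨mex v, v, hv, hvne, rfl⟩
  obtain ⟨v, hv, hvne, hmv⟩ := Nat.sInf_mem hTne
  have h1 : (X 1 : R3) * v ∈ V.map (ml (X 0)) := hle ⟨v, hv, rfl⟩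
  obtain ⟨w, hw, hwe⟩ := h1
  have hwe' : (X 0 : R3) * w = X 1 * v := hwe
  have hx1v : (X 1 : R3) * v ≠ 0 := mul_ne_zero (X_ne_zero 1) hvne
  have hwne : w ≠ 0 := by rintro rfl; rw [mul_zero] at hwe'; exact hx1v hwe'.symm
  have e1 : mex ((X 1 : R3) * v) = mex v := mex_mul_X1 v
  have e0 : mex ((X 0 : R3) * w) = mex w + 1 := mex_mul_X0 hwne
  rw [hwe', e1] at e0
  have hmemT : mex w ∈ T := ⟨w, hw, hwne, rfl⟩
  have := Nat.sInf_le hmemT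
  omega

lemma zmul_le_ker (W : Submodule k (MvPolynomial (Fin 3) k)) :
    W.map (ml (X 2)) ≤ LinearMap.ker (rho k).toLinearMap := by
  rintro q ⟨g, _, rfl⟩
  show rho k ((X 2 : R3) * g) = 0
  rw [map_mul, rho_X2, zero_mul]

lemma zmul_le_P1mul {W : Submodule k (MvPolynomial (Fin 3) k)} :
    W.map (ml (X 2)) ≤ PP k 1 * W := by
  rw [← span_mul_eq_map]
  exact mul_le_mul' (span_le.mpr (by simpa using X_mem_PP1 (k := k) 2)) le_rfl

lemma map_rho_P1mul (U : Submodule k (MvPolynomial (Fin 3) k)) :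
    (PP k 1 * U).map (rho k).toLinearMap = QQ k 1 * U.map (rho k).toLinearMap := by
  rw [Submodule.map_mul _ _ (rho k), map_rho_PP 1]

lemma lemB : ∀ (r : ℕ) (U : Submodule k (MvPolynomial (Fin 3) k)), U ≤ PP k r →
    finrank k (PP k r) ≤ finrank k U + r →
    finrank k U + (r+2) ≤ finrank k (PP k 1 * U) := by
  intro r
  induction r with
  | zero =>
    intro U hU hrk
    obtain rfl : U = PP k 0 := Submodule.eq_of_le_of_finrank_le hU (by omega)
    have h1 : PP k 1 * PP k 0 = PP k 1 := by
      have := P1_mul_PP (k := k) 0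
      simpa using this
    rw [h1, D_one, D_zero]
  | succ r ih =>
    intro U hU hrk
    haveI : FiniteDimensional k U := Submodule.finiteDimensional_of_le hU
    set Ub := U.map (rho k).toLinearMap with hUbdef
    have hUbQ : Ub ≤ QQ k (r+1) := by rw [← map_rho_PP]; exact Submodule.map_mono hU
    haveI : FiniteDimensional k Ub := Module.Finite.map _ _
    haveI : FiniteDimensional k (QQ k (r+1)) := Submodule.finiteDimensional_of_le (QQ_le_PP _)
    set U' : Submodule k (MvPolynomial (Fin 3) k) := PP k r ⊓ Submodule.comap (ml (X 2)) U
      with hU'def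
    haveI : FiniteDimensional k U' := Submodule.finiteDimensional_of_le inf_le_left
    have fact1 : U'.map (ml (X 2)) = U ⊓ (PP k r).map (ml (X 2)) := by
      apply le_antisymm
      · rintro q ⟨g, ⟨hg1, hg2⟩, rfl⟩
        exact ⟨hg2, ⟨g, hg1, rfl⟩⟩
      · rintro q ⟨hq1, g, hg, rfl⟩
        exact ⟨g, ⟨hg, hq1⟩, rfl⟩
    have hinf : U ⊓ LinearMap.ker (rho k).toLinearMap = U'.map (ml (X 2)) := by
      rw [fact1, ← ker_rho_PP, ← inf_assoc, inf_eq_left.mpr hU]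
    have hrn : finrank k Ub + finrank k ↥(U ⊓ LinearMap.ker (rho k).toLinearMap)
        = finrank k U := rank_nullity_sub _ U
    have hU'z : finrank k (U'.map (ml (X 2))) = finrank k U' := map_ml_rank (X_ne_zero 2) U'
    have hsplit : finrank k Ub + finrank k U' = finrank k U := by
      rw [← hrn, hinf, hU'z]
    have hP1U_le : PP k 1 * U ≤ PP k (r+2) := P1_mul_le hU
    haveI : FiniteDimensional k (PP k 1 * U : Submodule k (MvPolynomial (Fin 3) k)) :=
      Submodule.finiteDimensional_of_le hP1U_le
    have hrnP : finrank k ((PP k 1 * U).map (rho k).toLinearMap)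
        + finrank k ↥((PP k 1 * U) ⊓ LinearMap.ker (rho k).toLinearMap)
        = finrank k (PP k 1 * U : Submodule k (MvPolynomial (Fin 3) k)) :=
      rank_nullity_sub _ _
    rw [map_rho_P1mul, ← hUbdef] at hrnP
    by_cases hfull : Ub = QQ k (r+1)
    · -- full restriction
      have hQmul : QQ k 1 * Ub = QQ k (r+2) := by rw [hfull, QQ_one_mul]
      have hzU : U.map (ml (X 2)) ≤ (PP k 1 * U) ⊓ LinearMap.ker (rho k).toLinearMap :=
        le_inf zmul_le_P1mul (zmul_le_ker U)
      haveI : FiniteDimensional k ↥((PP k 1 * U) ⊓ LinearMap.ker (rho k).toLinearMap) :=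
        Submodule.finiteDimensional_of_le inf_le_left
      have h1 : finrank k (U.map (ml (X 2)))
          ≤ finrank k ↥((PP k 1 * U) ⊓ LinearMap.ker (rho k).toLinearMap) :=
        Submodule.finrank_mono hzU
      rw [map_ml_rank (X_ne_zero 2)] at h1
      rw [hQmul, QQ_rank] at hrnP
      omega
    · -- proper restriction
      have hUbne : Ub ≠ ⊥ := by
        intro hbot
        have hUker : U ≤ LinearMap.ker (rho k).toLinearMap := by
          intro u hu
          have hm : (rho k).toLinearMap u ∈ Ub := ⟨u, hu, rfl⟩
          rw [hbot] at hm
          simpa using hm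
        have : U ≤ (PP k r).map (ml (X 2)) := by
          rw [← ker_rho_PP]; exact le_inf hU hUker
        have hle := Submodule.finrank_mono (s := U) (t := (PP k r).map (ml (X 2)))
          (by exact this)
        rw [map_ml_rank (X_ne_zero 2)] at hle
        have hD := D_succ (k := k) r
        omega
      have hlt : Ub < QQ k (r+1) := lt_of_le_of_ne hUbQ hfull
      have hUbrk : finrank k Ub < r + 2 := by
        have := Submodule.finrank_lt_finrank_of_lt hlt
        rwa [QQ_rank] at this
      have hDs := D_succ (k := k) r
      have hih := ih U' inf_le_left (by omega)
      have hG := lemG Ub hUbne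
      -- z·(P1·U') ≤ (P1·U) ⊓ ker
      have hzP1U' : (PP k 1 * U').map (ml (X 2)) ≤ (PP k 1 * U) ⊓ LinearMap.ker (rho k).toLinearMap := by
        refine le_inf ?_ (zmul_le_ker _)
        rw [← span_mul_eq_map, mul_left_comm, span_mul_eq_map]
        refine mul_le_mul' le_rfl ?_
        rw [fact1]
        exact inf_le_left
      haveI : FiniteDimensional k ↥((PP k 1 * U) ⊓ LinearMap.ker (rho k).toLinearMap) :=
        Submodule.finiteDimensional_of_le inf_le_left
      have h2 : finrank k ((PP k 1 * U').map (ml (X 2)))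
          ≤ finrank k ↥((PP k 1 * U) ⊓ LinearMap.ker (rho k).toLinearMap) :=
        Submodule.finrank_mono hzP1U'
      rw [map_ml_rank (X_ne_zero 2)] at h2
      have h3 : finrank k (QQ k 1 * Ub) ≤ finrank k ((PP k 1 * U).map (rho k).toLinearMap) := by
        rw [map_rho_P1mul]
      omega

lemma key : ∀ (r : ℕ) (U : Submodule k (MvPolynomial (Fin 3) k)), U ≤ PP k (r+1) →
    finrank k U + (r+2) = finrank k (PP k (r+1)) →
    finrank k (PP k 1 * U) + (r+3) ≤ finrank k (PP k (r+2)) →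
    ∃ ℓ : MvPolynomial (Fin 3) k, ℓ ≠ 0 ∧ ℓ ∈ PP k 1 ∧ U = (PP k r).map (ml ℓ) := by
  intro r
  induction r with
  | zero =>
    intro U hU hrk _
    have hD1 : finrank k (PP k (0+1)) = 3 := D_one
    have hrkU : finrank k U = 1 := by omega
    have hUne : U ≠ ⊥ := by
      intro h
      rw [h, finrank_bot] at hrkU
      omega
    obtain ⟨w, hw, hwne⟩ := (Submodule.ne_bot_iff U).mp hUne
    haveI : FiniteDimensional k U := Submodule.finiteDimensional_of_le hU
    have hspan : span k {w} = U := by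
      refine Submodule.eq_of_le_of_finrank_le ((span_le (s := ({w} : Set _))).mpr
        (by simpa using hw)) ?_
      rw [finrank_span_singleton hwne]
      omega
    refine ⟨w, hwne, hU hw, ?_⟩
    rw [← span_mul_eq_map, PP_zero, Submodule.mul_one]
    exact hspan.symm
  | succ r ih =>
    intro U hU hrk hgrow
    haveI : FiniteDimensional k U := Submodule.finiteDimensional_of_le hU
    set Ub := U.map (rho k).toLinearMap with hUbdef
    have hUbQ : Ub ≤ QQ k (r+1+1) := by rw [← map_rho_PP]; exact Submodule.map_mono hU
    haveI : FiniteDimensional k Ub := Module.Finite.map _ _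
    haveI : FiniteDimensional k (QQ k (r+1+1)) := Submodule.finiteDimensional_of_le (QQ_le_PP _)
    set U' : Submodule k (MvPolynomial (Fin 3) k) := PP k (r+1) ⊓ Submodule.comap (ml (X 2)) U
      with hU'def
    haveI : FiniteDimensional k U' := Submodule.finiteDimensional_of_le inf_le_left
    have fact1 : U'.map (ml (X 2)) = U ⊓ (PP k (r+1)).map (ml (X 2)) := by
      apply le_antisymm
      · rintro q ⟨g, ⟨hg1, hg2⟩, rfl⟩
        exact ⟨hg2, ⟨g, hg1, rfl⟩⟩
      · rintro q ⟨hq1, g, hg, rfl⟩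
        exact ⟨g, ⟨hg, hq1⟩, rfl⟩
    have hinf : U ⊓ LinearMap.ker (rho k).toLinearMap = U'.map (ml (X 2)) := by
      rw [fact1, ← ker_rho_PP, ← inf_assoc, inf_eq_left.mpr hU]
    have hrn : finrank k Ub + finrank k ↥(U ⊓ LinearMap.ker (rho k).toLinearMap)
        = finrank k U := rank_nullity_sub _ U
    have hU'z : finrank k (U'.map (ml (X 2))) = finrank k U' := map_ml_rank (X_ne_zero 2) U'
    have hsplit : finrank k Ub + finrank k U' = finrank k U := by
      rw [← hrn, hinf, hU'z]
    have hDs1 : finrank k (PP k (r+1+1)) = finrank k (PP k (r+1)) + (r+3) := by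
      have := D_succ (k := k) (r+1); omega
    have hDs2 : finrank k (PP k (r+1+2)) = finrank k (PP k (r+1+1)) + (r+4) := by
      exact D_succ (k := k) (r+1+1)
    by_cases hUbbot : Ub = ⊥
    · -- U is a multiple of z
      have hUker : U ≤ LinearMap.ker (rho k).toLinearMap := by
        intro u hu
        have hm : (rho k).toLinearMap u ∈ Ub := ⟨u, hu, rfl⟩
        rw [hUbbot] at hm
        simpa using hm
      have hle : U ≤ (PP k (r+1)).map (ml (X 2)) := by
        rw [← ker_rho_PP]; exact le_inf hU hUker
      have heq : U = (PP k (r+1)).map (ml (X 2)) := by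
        refine Submodule.eq_of_le_of_finrank_le hle ?_
        rw [map_ml_rank (X_ne_zero 2)]
        omega
      exact ⟨X 2, X_ne_zero 2, X_mem_PP1 2, heq⟩
    · have hP1U_le : PP k 1 * U ≤ PP k (r+1+1+1) := P1_mul_le hU
      haveI : FiniteDimensional k (PP k 1 * U : Submodule k (MvPolynomial (Fin 3) k)) :=
        Submodule.finiteDimensional_of_le hP1U_le
      have hrnP : finrank k ((PP k 1 * U).map (rho k).toLinearMap)
          + finrank k ↥((PP k 1 * U) ⊓ LinearMap.ker (rho k).toLinearMap)
          = finrank k (PP k 1 * U : Submodule k (MvPolynomial (Fin 3) k)) :=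
        rank_nullity_sub _ _
      rw [map_rho_P1mul, ← hUbdef] at hrnP
      have hG := lemG Ub hUbbot
      haveI : FiniteDimensional k ↥((PP k 1 * U) ⊓ LinearMap.ker (rho k).toLinearMap) :=
        Submodule.finiteDimensional_of_le inf_le_left
      have hzP1U' : (PP k 1 * U').map (ml (X 2))
          ≤ (PP k 1 * U) ⊓ LinearMap.ker (rho k).toLinearMap := by
        refine le_inf ?_ (zmul_le_ker _)
        rw [← span_mul_eq_map, mul_left_comm, span_mul_eq_map]
        refine mul_le_mul' le_rfl ?_
        rw [fact1]
        exact inf_le_left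
      have h2 : finrank k (PP k 1 * U' : Submodule k (MvPolynomial (Fin 3) k))
          ≤ finrank k ↥((PP k 1 * U) ⊓ LinearMap.ker (rho k).toLinearMap) := by
        have := Submodule.finrank_mono hzP1U'
        rwa [map_ml_rank (X_ne_zero 2)] at this
      have hnotfull : Ub ≠ QQ k (r+1+1) := by
        intro hfull
        have hQmul : QQ k 1 * Ub = QQ k (r+1+1+1) := by rw [hfull, QQ_one_mul]
        have hzU : U.map (ml (X 2)) ≤ (PP k 1 * U) ⊓ LinearMap.ker (rho k).toLinearMap :=
          le_inf zmul_le_P1mul (zmul_le_ker U)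
        have h1 : finrank k U ≤ finrank k ↥((PP k 1 * U) ⊓ LinearMap.ker (rho k).toLinearMap) := by
          have := Submodule.finrank_mono hzU
          rwa [map_ml_rank (X_ne_zero 2)] at this
        rw [hQmul, QQ_rank] at hrnP
        omega
      have hUblt : finrank k Ub < r + 3 := by
        have := Submodule.finrank_lt_finrank_of_lt (lt_of_le_of_ne hUbQ hnotfull)
        rwa [QQ_rank] at this
      have hmge : r + 2 ≤ finrank k Ub := by
        by_contra hlt'
        push_neg at hlt'
        have hihB := lemB (r+1) U' inf_le_left (by omega)
        omega
      have hm : finrank k Ub = r + 2 := by omega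
      have hb1 : finrank k (PP k (r+2)) = finrank k (PP k (r+1+1)) := rfl
      obtain ⟨l, hlne, hlP1, hU'eq⟩ := ih U' inf_le_left (by omega) (by omega)
      obtain ⟨T, hTdef⟩ : ∃ T : Submodule k (MvPolynomial (Fin 3) k),
          T = PP k (r+1+1) ⊓ Submodule.comap (ml (X 2)) (PP k 1 * U) := ⟨_, rfl⟩
      have hUT : U ≤ T := by
        rw [hTdef]
        refine le_inf hU ?_
        intro u hu
        exact zmul_le_P1mul ⟨u, hu, rfl⟩
      have hchain : (((PP k (r+1)).map (ml l)).map (ml (X 2))) ≤ PP k 1 * U := by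
        rw [← span_mul_eq_map, ← span_mul_eq_map, ← P1_mul_PP r,
          mul_left_comm (span k {l}) (PP k 1) (PP k r),
          mul_left_comm (span k {X 2}) (PP k 1) (span k {l} * PP k r),
          span_mul_eq_map l (PP k r), ← hU'eq, span_mul_eq_map (X 2) U']
        refine mul_le_mul' le_rfl ?_
        rw [fact1]
        exact inf_le_left
      have hlT : (PP k (r+1)).map (ml l) ≤ T := by
        rw [hTdef]
        refine le_inf ?_ ?_
        · have hsl : span k {l} ≤ PP k 1 :=
            span_le.mpr (Set.singleton_subset_iff.mpr hlP1)
          calc (PP k (r+1)).map (ml l) = span k {l} * PP k (r+1) := (span_mul_eq_map _ _).symm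
            _ ≤ PP k 1 * PP k (r+1) := mul_le_mul' hsl le_rfl
            _ = PP k (r+1+1) := P1_mul_PP (r+1)
        · intro q hq
          obtain ⟨g, hg, rfl⟩ := hq
          exact hchain ⟨ml l g, ⟨g, hg, rfl⟩, rfl⟩
      haveI : FiniteDimensional k T := by
        rw [hTdef]; exact Submodule.finiteDimensional_of_le inf_le_left
      have hTrk : finrank k T ≤ finrank k (PP k (r+1)) := by
        have h4 : T.map (ml (X 2)) ≤ (PP k 1 * U) ⊓ LinearMap.ker (rho k).toLinearMap := by
          refine le_inf ?_ (zmul_le_ker T)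
          rw [hTdef]
          rintro q ⟨g, hg, rfl⟩
          exact hg.2
        have h5 := Submodule.finrank_mono h4
        rw [map_ml_rank (X_ne_zero 2)] at h5
        omega
      have hTU : T = U := by
        refine (Submodule.eq_of_le_of_finrank_le hUT ?_).symm
        omega
      have hfin : (PP k (r+1)).map (ml l) = U := by
        refine Submodule.eq_of_le_of_finrank_le (hTU ▸ hlT) ?_
        rw [map_ml_rank hlne]
        omega
      exact ⟨l, hlne, hlP1, hfin.symm⟩

end S12aux

/-- If `A = k[x₁,x₂,x₃]/I` is a standard graded Artinian algebra whose
Hilbert function satisfies `h₁ = 3` and, for some `d ≥ 1`, `s ≥ 2`,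
`h_d = h_{d+1} = ⋯ = h_{d+s-1} = d + s` and `h_{d+s} > d + s`, then `A` has a nonzero
socle element in degree `d + s - 2`; in particular `A` is not level. -/
theorem stmt12 {k : Type*} [Field k] (I : Ideal (MvPolynomial (Fin 3) k))
    (hhom : IsHomogeneousIdeal k 3 I)
    (hart : FiniteDimensional k (MvPolynomial (Fin 3) k ⧸ I))
    (h1 : hilbFn k 3 I 1 = 3)
    (d s : ℕ) (hd : 1 ≤ d) (hs : 2 ≤ s)
    (hplateau : ∀ t, d ≤ t → t ≤ d + s - 1 → hilbFn k 3 I t = d + s)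
    (hjump : d + s < hilbFn k 3 I (d + s)) :
    (∃ a, IsSocleElem k 3 I (d + s - 2) a) ∧ ¬ IsLevel k 3 I := by
  classical
  have hker : LinearMap.ker (Ideal.Quotient.mkₐ k I).toLinearMap = I.restrictScalars k := by
    ext p
    simp only [LinearMap.mem_ker, AlgHom.toLinearMap_apply, Ideal.Quotient.mkₐ_eq_mk,
      Ideal.Quotient.eq_zero_iff_mem, Submodule.restrictScalars_mem]
  have hilb_eq : ∀ r : ℕ, hilbFn k 3 I r
      + Module.finrank k ↥(S12aux.PP k r ⊓ I.restrictScalars k)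
      = Module.finrank k (S12aux.PP k r) := by
    intro r
    have h := S12aux.rank_nullity_sub (Ideal.Quotient.mkₐ k I).toLinearMap (S12aux.PP k r)
    rw [hker] at h
    exact h
  set u := d + s - 2 with hu
  have hu1 : 1 ≤ u := by omega
  obtain ⟨v, hv⟩ : ∃ v, u = v + 1 := ⟨u - 1, by omega⟩
  have hds : d + s = u + 2 := by omega
  have hpl_u : hilbFn k 3 I u = u + 2 := by
    have := hplateau u (by omega) (by omega)
    omega
  have hpl_u1 : hilbFn k 3 I (u+1) = u + 2 := by
    have := hplateau (u+1) (by omega) (by omega)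
    omega
  have hjump' : u + 3 ≤ hilbFn k 3 I (u+2) := by
    rw [hds] at hjump
    omega
  have hIu1 : Module.finrank k ↥(S12aux.PP k (u+1) ⊓ I.restrictScalars k) + (u+2)
      = Module.finrank k (S12aux.PP k (u+1)) := by
    have := hilb_eq (u+1)
    omega
  have hP1le : S12aux.PP k 1 * (S12aux.PP k (u+1) ⊓ I.restrictScalars k)
      ≤ S12aux.PP k (u+2) ⊓ I.restrictScalars k := by
    rw [Submodule.mul_le]
    intro m hm n hn
    refine ⟨?_, ?_⟩
    · have hh := (show MvPolynomial.IsHomogeneous m 1 from hm).mul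
        (show MvPolynomial.IsHomogeneous n (u+1) from hn.1)
      have he : 1 + (u + 1) = u + 2 := by omega
      rwa [he] at hh
    · exact Ideal.mul_mem_left I m hn.2
  haveI : FiniteDimensional k ↥(S12aux.PP k (u+2) ⊓ I.restrictScalars k) :=
    Submodule.finiteDimensional_of_le inf_le_left
  have hgrow : Module.finrank k (S12aux.PP k 1 * (S12aux.PP k (u+1) ⊓ I.restrictScalars k)
      : Submodule k (MvPolynomial (Fin 3) k)) + (u+3)
      ≤ Module.finrank k (S12aux.PP k (u+2)) := by
    have h1 := Submodule.finrank_mono hP1le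
    have h2 := hilb_eq (u+2)
    omega
  obtain ⟨l, hlne, hlP1, hUeq⟩ := S12aux.key u (S12aux.PP k (u+1) ⊓ I.restrictScalars k)
    inf_le_left (by omega) hgrow
  -- the candidate socle space
  have hGle : (S12aux.PP k v).map (S12aux.ml l) ≤ S12aux.PP k u := by
    rw [← S12aux.span_mul_eq_map]
    refine le_trans (mul_le_mul'
      (Submodule.span_le.mpr (Set.singleton_subset_iff.mpr hlP1)) le_rfl) ?_
    rw [S12aux.P1_mul_PP, ← hv]
  have hrkG : Module.finrank k ((S12aux.PP k v).map (S12aux.ml l))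
      = Module.finrank k (S12aux.PP k v) := S12aux.map_ml_rank hlne _
  have hIu : Module.finrank k ↥(S12aux.PP k u ⊓ I.restrictScalars k) + (u+2)
      = Module.finrank k (S12aux.PP k u) := by
    have := hilb_eq u
    omega
  have hDu : Module.finrank k (S12aux.PP k (v+1))
      = Module.finrank k (S12aux.PP k v) + (v+2) := S12aux.D_succ v
  have hbu : Module.finrank k (S12aux.PP k u) = Module.finrank k (S12aux.PP k (v+1)) := by
    rw [hv]
  haveI : FiniteDimensional k ↥(S12aux.PP k u ⊓ I.restrictScalars k) :=
    Submodule.finiteDimensional_of_le inf_le_left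
  have hnle : ¬ ((S12aux.PP k v).map (S12aux.ml l) ≤ I.restrictScalars k) := by
    intro hle
    have hle2 : (S12aux.PP k v).map (S12aux.ml l)
        ≤ S12aux.PP k u ⊓ I.restrictScalars k := le_inf hGle hle
    have h3 := Submodule.finrank_mono hle2
    rw [hrkG] at h3
    omega
  obtain ⟨a0, ha0G, ha0nI⟩ := SetLike.not_le_iff_exists.mp hnle
  have ha0PP : a0 ∈ MvPolynomial.homogeneousSubmodule (Fin 3) k (d + s - 2) := hGle ha0G
  obtain ⟨g0, hg0, ha0⟩ := ha0G
  have hsoc : IsSocleElem k 3 I (d + s - 2) ((Ideal.Quotient.mkₐ k I) a0) := by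
    refine ⟨⟨a0, ha0PP, rfl⟩, ?_, ?_⟩
    · intro h0
      rw [Ideal.Quotient.mkₐ_eq_mk, Ideal.Quotient.eq_zero_iff_mem] at h0
      exact ha0nI h0
    · rintro b ⟨p, hp, rfl⟩
      have hmul : (Ideal.Quotient.mkₐ k I) p * (Ideal.Quotient.mkₐ k I) a0
          = (Ideal.Quotient.mkₐ k I) (p * a0) := (map_mul _ _ _).symm
      show (Ideal.Quotient.mkₐ k I).toLinearMap p * (Ideal.Quotient.mkₐ k I) a0 = 0
      rw [AlgHom.toLinearMap_apply, hmul, Ideal.Quotient.mkₐ_eq_mk,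
        Ideal.Quotient.eq_zero_iff_mem]
      -- p * a0 = l * (p * g0) ∈ I
      have hpg : p * g0 ∈ S12aux.PP k u := by
        have hh := (show MvPolynomial.IsHomogeneous p 1 from hp).mul
          (show MvPolynomial.IsHomogeneous g0 v from hg0)
        have he : 1 + v = u := by omega
        rwa [he] at hh
      have hmem : l * (p * g0) ∈ (S12aux.PP k u).map (S12aux.ml l) := ⟨p * g0, hpg, rfl⟩
      rw [← hUeq] at hmem
      have hI : l * (p * g0) ∈ I := hmem.2
      have heq2 : p * a0 = l * (p * g0) := by
        rw [← ha0]
        ring_nf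
        rw [S12aux.ml_apply]
        ring
      rwa [heq2]
  refine ⟨⟨_, hsoc⟩, ?_⟩
  intro hlev
  refine hlev (d + s - 2) ⟨d + s, by omega, ?_⟩ _ hsoc
  intro hbot
  have h0 : hilbFn k 3 I (d + s) = 0 := by
    show Module.finrank k (gradedPiece k 3 I (d+s)) = 0
    rw [hbot]
    exact finrank_bot k _
  omega
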